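/- Let M be defined on n×n real matrices entrywise by M(A)_{ij} = A_{ij} for i < j, M(A)_{ij} = −A_{ji} for i > j, and M(A)_{ii} = 0. If X and Y are symmetric n×n real matrices that commute (⁅X,Y⁆ = 0), then M(⁅M(X), Y⁆) − M(⁅M(Y), X⁆) − ⁅M(X), M(Y)⁆ = 0. (This is the vanishing of the bracket function of the two Toda vector fields T^X and T^Y, and is the key identity proving that Toda fields associated with commuting symmetric matrices commute.) -/

import Mathlib

open Matrix

/-- The Toda projection: `M(A)_{ij} = A_{ij}` for `i < j`, `M(A)_{ij} = -A_{ji}` for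
`i > j`, and `M(A)_{ii} = 0`. -/
def todaProj {n : ℕ} (A : Matrix (Fin n) (Fin n) ℝ) : Matrix (Fin n) (Fin n) ℝ :=
  Matrix.of fun i j => if i < j then A i j else if j < i then -A j i else 0

lemma toda_apply {n : ℕ} (A : Matrix (Fin n) (Fin n) ℝ) (i j : Fin n) :
    todaProj A i j = if i < j then A i j else if j < i then -A j i else 0 := rfl

lemma toda_lt {n : ℕ} (A : Matrix (Fin n) (Fin n) ℝ) {i j : Fin n} (h : i < j) :
    todaProj A i j = A i j := by simp [toda_apply, h]

lemma toda_gt {n : ℕ} (A : Matrix (Fin n) (Fin n) ℝ) {i j : Fin n} (h : j < i) :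
    todaProj A i j = -A j i := by simp [toda_apply, h, h.not_gt]

lemma toda_diag {n : ℕ} (A : Matrix (Fin n) (Fin n) ℝ) (i : Fin n) :
    todaProj A i i = 0 := by simp [toda_apply]

lemma toda_transpose {n : ℕ} (A : Matrix (Fin n) (Fin n) ℝ) :
    (todaProj A)ᵀ = -todaProj A := by
  ext i j
  rcases lt_trichotomy i j with h | h | h
  · simp [transpose_apply, toda_lt A h, toda_gt A h]
  · subst h; simp [toda_diag]
  · simp [transpose_apply, toda_lt A h, toda_gt A h]

lemma lower_N {n : ℕ} (A : Matrix (Fin n) (Fin n) ℝ) {i j : Fin n} (h : i < j) :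
    (A - todaProj A) i j = 0 := by
  simp [Matrix.sub_apply, toda_lt A h]

lemma lower_mul_sub {n : ℕ} (X Y : Matrix (Fin n) (Fin n) ℝ) {i j : Fin n} (h : i < j) :
    ((Y - todaProj Y) * (X - todaProj X) - (X - todaProj X) * (Y - todaProj Y)) i j = 0 := by
  set NX := X - todaProj X with hNX
  set NY := Y - todaProj Y with hNY
  have h1 : ∑ k, NY i k * NX k j = 0 := by
    apply Finset.sum_eq_zero
    intro k _
    rcases lt_or_ge i k with hk | hk
    · rw [hNY, lower_N Y hk, zero_mul]
    · rw [hNX, lower_N X (lt_of_le_of_lt hk h), mul_zero]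
  have h2 : ∑ k, NX i k * NY k j = 0 := by
    apply Finset.sum_eq_zero
    intro k _
    rcases lt_or_ge i k with hk | hk
    · rw [hNX, lower_N X hk, zero_mul]
    · rw [hNY, lower_N Y (lt_of_le_of_lt hk h), mul_zero]
  simp only [Matrix.sub_apply, mul_apply, h1, h2, sub_zero]

/-- For commuting symmetric matrices `X`, `Y` one has
`M⁅M(X),Y⁆ - M⁅M(Y),X⁆ - ⁅M(X),M(Y)⁆ = 0` (the key identity showing that the Toda
fields associated with commuting symmetric matrices commute). -/
theorem todaFields_commute_identity {n : ℕ} (X Y : Matrix (Fin n) (Fin n) ℝ)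
    (hX : Xᵀ = X) (hY : Yᵀ = Y) (hXY : X * Y - Y * X = 0) :
    todaProj (todaProj X * Y - Y * todaProj X)
      - todaProj (todaProj Y * X - X * todaProj Y)
      - (todaProj X * todaProj Y - todaProj Y * todaProj X) = 0 := by
  have key : (todaProj X * Y - Y * todaProj X) - (todaProj Y * X - X * todaProj Y)
      - (todaProj X * todaProj Y - todaProj Y * todaProj X)
      = (Y - todaProj Y) * (X - todaProj X) - (X - todaProj X) * (Y - todaProj Y) := by
    have h2 : ((todaProj X * Y - Y * todaProj X) - (todaProj Y * X - X * todaProj Y)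
        - (todaProj X * todaProj Y - todaProj Y * todaProj X))
        - ((Y - todaProj Y) * (X - todaProj X) - (X - todaProj X) * (Y - todaProj Y))
        = X * Y - Y * X := by noncomm_ring
    rw [hXY] at h2
    exact sub_eq_zero.mp h2
  have hE : ∀ {i j : Fin n}, i < j →
      (todaProj X * Y - Y * todaProj X) i j - (todaProj Y * X - X * todaProj Y) i j
        - (todaProj X * todaProj Y - todaProj Y * todaProj X) i j = 0 := by
    intro i j h
    have := congrFun (congrFun key i) j
    simpa only [Matrix.sub_apply, lower_mul_sub X Y h] using this.trans (lower_mul_sub X Y h)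
  have hT : (todaProj X * todaProj Y - todaProj Y * todaProj X)ᵀ
      = -(todaProj X * todaProj Y - todaProj Y * todaProj X) := by
    rw [transpose_sub, transpose_mul, transpose_mul, toda_transpose, toda_transpose]
    noncomm_ring
  have hbr : ∀ i j : Fin n, (todaProj X * todaProj Y - todaProj Y * todaProj X) i j
      = -((todaProj X * todaProj Y - todaProj Y * todaProj X) j i) := by
    intro i j
    have h0 := congrFun (congrFun hT j) i
    simp only [transpose_apply, Matrix.neg_apply] at h0
    exact h0
  ext i j
  simp only [Matrix.sub_apply, Matrix.zero_apply]
  rcases lt_trichotomy i j with h | h | h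
  · rw [toda_lt _ h, toda_lt _ h]
    exact hE h
  · subst h
    rw [toda_diag, toda_diag]
    have h0 := hbr i i
    simp only [Matrix.sub_apply] at h0
    linarith
  · rw [toda_gt _ h, toda_gt _ h]
    simp only [Matrix.sub_apply]
    have h1 := hE h
    have h2 := hbr i j
    simp only [Matrix.sub_apply] at h1 h2
    linarith
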